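/- Let $H, G \leq W_n$ be subgroups of the automorphism group of the depth-$n$ complete rooted binary tree with $|H| = |G|$ and $H \cap K_n = \{\mathrm{id}\}$. If every element of $H$ can be conjugated into $G$ by some element of $K_n$, then the entire group $H$ can be conjugated into $G$ by a single element of $K_n$ (in fact $H^b = G$ for some $b \in K_n$). -/

import Mathlib

/-- Leaves of the complete rooted binary tree of depth `n`. -/
abbrev Leaf (n : ℕ) := Fin n → Bool

/-- Two leaves agree on the first `k` levels. -/
def agree (n k : ℕ) (x y : Leaf n) : Prop := ∀ i : Fin n, (i : ℕ) < k → x i = y i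

/-- The automorphism group of the depth-`n` complete rooted binary tree, realized as the
subgroup of permutations of the leaves preserving, for each `k`, agreement on the first
`k` levels. -/
def W (n : ℕ) : Subgroup (Equiv.Perm (Leaf n)) where
  carrier := {σ | ∀ (k : ℕ) (x y : Leaf n), agree n k x y ↔ agree n k (σ x) (σ y)}
  one_mem' := by intro k x y; rfl
  mul_mem' := by
    intro a b ha hb k x y
    simpa [Equiv.Perm.mul_apply] using (hb k x y).trans (ha k (b x) (b y))
  inv_mem' := by
    intro a ha k x y
    simpa using (ha k (a⁻¹ x) (a⁻¹ y)).symm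

/-- Restriction of a leaf to the first `n-1` levels. -/
def res {n : ℕ} (x : Leaf n) : Leaf (n - 1) := fun i => x (Fin.castLE (Nat.sub_le n 1) i)

/-- Extension of a depth-`n-1` vertex to a leaf. -/
def ext {n : ℕ} (p : Leaf (n - 1)) : Leaf n :=
  fun i => if h : (i : ℕ) < n - 1 then p ⟨i, h⟩ else false

lemma res_ext {n : ℕ} (p : Leaf (n - 1)) : res (ext p) = p := by
  funext i
  simp [res, ext, i.isLt]

lemma agree_iff_res {n : ℕ} (x y : Leaf n) : agree n (n - 1) x y ↔ res x = res y := by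
  constructor
  · intro h; funext i; exact h _ i.isLt
  · intro h i hi
    have h2 : Fin.castLE (Nat.sub_le n 1) (⟨(i : ℕ), hi⟩ : Fin (n - 1)) = i := by
      ext; rfl
    have := congrFun h (⟨(i : ℕ), hi⟩ : Fin (n - 1))
    simpa [res, h2] using this

/-- The natural restriction homomorphism `π_n : W_n → Aut(T_{n-1})`. -/
def treePi (n : ℕ) : (W n) →* Equiv.Perm (Leaf (n - 1)) where
  toFun σ :=
    { toFun := fun p => res ((σ : Equiv.Perm (Leaf n)) (ext p))
      invFun := fun p => res ((σ : Equiv.Perm (Leaf n))⁻¹ (ext p))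
      left_inv := by
        intro p
        have h1 : agree n (n - 1) (ext (res ((σ : Equiv.Perm (Leaf n)) (ext p))))
            ((σ : Equiv.Perm (Leaf n)) (ext p)) :=
          (agree_iff_res _ _).2 (res_ext _)
        have hinv := (W n).inv_mem σ.2
        have h2 := (hinv (n - 1) _ _).1 h1
        have h3 := (agree_iff_res _ _).1 h2
        simpa [res_ext] using h3
      right_inv := by
        intro p
        have h1 : agree n (n - 1) (ext (res ((σ : Equiv.Perm (Leaf n))⁻¹ (ext p))))
            ((σ : Equiv.Perm (Leaf n))⁻¹ (ext p)) :=
          (agree_iff_res _ _).2 (res_ext _)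
        have h2 := (σ.2 (n - 1) _ _).1 h1
        have h3 := (agree_iff_res _ _).1 h2
        simpa [res_ext] using h3 }
  map_one' := by
    refine Equiv.ext fun p => ?_
    simp [res_ext]
  map_mul' := by
    intro σ τ
    refine Equiv.ext fun p => ?_
    have h1 : agree n (n - 1) (ext (res ((τ : Equiv.Perm (Leaf n)) (ext p))))
        ((τ : Equiv.Perm (Leaf n)) (ext p)) := (agree_iff_res _ _).2 (res_ext _)
    have h2 := (σ.2 (n - 1) _ _).1 h1
    have h3 := (agree_iff_res _ _).1 h2
    simpa using h3.symm

/-- `K_n`, the kernel of `π_n`, viewed as a subgroup of the permutations of the leaves. -/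
def K (n : ℕ) : Subgroup (Equiv.Perm (Leaf n)) :=
  Subgroup.map (W n).subtype (treePi n).ker

/-- The conjugate `X^a = a⁻¹ X a` of a subgroup `X` by an element `a`. -/
def conjBy {G : Type*} [Group G] (a : G) (X : Subgroup G) : Subgroup G :=
  X.map (MulAut.conj a⁻¹).toMonoidHom

/-- `M` is a maximal subgroup of `H` (inside a common ambient group). -/
def IsMaximalIn {G : Type*} [Group G] (M H : Subgroup G) : Prop :=
  M < H ∧ ∀ X : Subgroup G, M < X → X ≤ H → X = H

/-- The Frattini subgroup of `H`: the intersection of all maximal subgroups of `H`. -/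
def frattiniIn {G : Type*} [Group G] (H : Subgroup G) : Subgroup G :=
  H ⊓ sInf {M | IsMaximalIn M H}


/-! ### Auxiliary material for the proof -/

/-- Flip the last coordinate of a leaf. -/
def flipL {n : ℕ} (x : Leaf n) : Leaf n := fun i => if (i : ℕ) = n - 1 then !(x i) else x i

/-- The induced map on depth-`n-1` vertices. -/
def barP {n : ℕ} (h : Equiv.Perm (Leaf n)) (p : Leaf (n - 1)) : Leaf (n - 1) :=
  res (h (ext p))

/-- Whether `a` flips the fiber over `p`. -/
def FK {n : ℕ} (a : Equiv.Perm (Leaf n)) (p : Leaf (n - 1)) : Bool :=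
  decide (a (ext p) ≠ ext p)

/-- Fiber-preserving permutations. -/
def Kset (n : ℕ) (a : Equiv.Perm (Leaf n)) : Prop := ∀ x, res (a x) = res x

lemma res_flip {n : ℕ} (x : Leaf n) : res (flipL x) = res x := by
  funext i
  have hi : (i : ℕ) ≠ n - 1 := Nat.ne_of_lt i.isLt
  simp [res, flipL, hi]

lemma flipL_flip_flip {n : ℕ} (x : Leaf n) : flipL (flipL x) = x := by
  funext i
  by_cases hi : (i : ℕ) = n - 1 <;> simp [flipL, hi]

lemma flip_ne {n : ℕ} (hn : 0 < n) (x : Leaf n) : flipL x ≠ x := by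
  intro h
  have h1 := congrFun h ⟨n - 1, by omega⟩
  simp [flipL] at h1

lemma res_coords {n : ℕ} {x y : Leaf n} (h : res x = res y) :
    ∀ j : Fin n, (j : ℕ) < n - 1 → x j = y j := by
  intro j hj
  have h1 := congrFun h ⟨(j : ℕ), hj⟩
  simpa [res, show Fin.castLE (Nat.sub_le n 1) ⟨(j : ℕ), hj⟩ = j from Fin.ext rfl] using h1

lemma eq_or_flip {n : ℕ} (hn : 0 < n) {x y : Leaf n} (h : res x = res y) :
    x = y ∨ x = flipL y := by
  have hcoord := res_coords h
  have hi0 : n - 1 < n := by omega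
  by_cases hl : x ⟨n - 1, hi0⟩ = y ⟨n - 1, hi0⟩
  · left; funext j
    rcases lt_or_ge (j : ℕ) (n - 1) with hj | hj
    · exact hcoord j hj
    · have hj' : j = ⟨n - 1, hi0⟩ := Fin.ext (show (j : ℕ) = n - 1 by have := j.isLt; omega)
      rw [hj']; exact hl
  · right; funext j
    rcases lt_or_ge (j : ℕ) (n - 1) with hj | hj
    · rw [hcoord j hj]; simp [flipL, Nat.ne_of_lt hj]
    · have hj' : j = ⟨n - 1, hi0⟩ := Fin.ext (show (j : ℕ) = n - 1 by have := j.isLt; omega)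
      subst hj'
      simp only [flipL, if_pos rfl]
      cases hxv : x ⟨n - 1, hi0⟩ <;> cases hyv : y ⟨n - 1, hi0⟩ <;> simp_all

lemma agree_ge {n k : ℕ} (hk : n ≤ k) (x y : Leaf n) : agree n k x y ↔ x = y :=
  ⟨fun h => funext fun i => h i (lt_of_lt_of_le i.isLt hk), fun h i _ => by rw [h]⟩

lemma Kset_coords {n : ℕ} {a : Equiv.Perm (Leaf n)} (ha : Kset n a) :
    ∀ (x : Leaf n) (i : Fin n), (i : ℕ) < n - 1 → a x i = x i :=
  fun x => res_coords (ha x)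

lemma Kset_mem_W {n : ℕ} {a : Equiv.Perm (Leaf n)} (ha : Kset n a) : a ∈ W n := by
  intro k x y
  rcases lt_or_ge k n with hk | hk
  · constructor <;> intro hag i hik
    · rw [Kset_coords ha x i (by omega), Kset_coords ha y i (by omega)]
      exact hag i hik
    · have h1 := Kset_coords ha x i (by omega)
      have h2 := Kset_coords ha y i (by omega)
      rw [← h1, ← h2]
      exact hag i hik
  · rw [agree_ge hk, agree_ge hk, EmbeddingLike.apply_eq_iff_eq]

lemma bar_res {n : ℕ} {h : Equiv.Perm (Leaf n)} (hh : h ∈ W n) (x : Leaf n) :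
    res (h x) = barP h (res x) := by
  have h1 : agree n (n - 1) (ext (res x)) x := (agree_iff_res _ _).2 (res_ext _)
  have h2 := (hh (n - 1) _ _).1 h1
  exact ((agree_iff_res _ _).1 h2).symm

lemma mem_K_iff {n : ℕ} (a : Equiv.Perm (Leaf n)) : a ∈ K n ↔ Kset n a := by
  rw [K, Subgroup.mem_map]
  constructor
  · rintro ⟨σ, hker, rfl⟩
    intro x
    have h1 : treePi n σ = 1 := hker
    have hbar : ∀ p, res ((σ : Equiv.Perm (Leaf n)) (ext p)) = p := by
      intro p
      have h2 : (treePi n σ) p = p := by rw [h1]; rfl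
      exact h2
    show res ((σ : Equiv.Perm (Leaf n)) x) = res x
    rw [bar_res σ.2 x]
    exact hbar (res x)
  · intro ha
    refine ⟨⟨a, Kset_mem_W ha⟩, ?_, rfl⟩
    show treePi n ⟨a, Kset_mem_W ha⟩ = 1
    apply Equiv.ext
    intro p
    show res (a (ext p)) = p
    rw [ha (ext p), res_ext]

lemma Kset_mul {n : ℕ} {a b : Equiv.Perm (Leaf n)} (ha : Kset n a) (hb : Kset n b) :
    Kset n (a * b) := by
  intro x
  show res (a (b x)) = res x
  rw [ha, hb]

lemma Kset_inv {n : ℕ} {a : Equiv.Perm (Leaf n)} (ha : Kset n a) : Kset n a⁻¹ := by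
  intro x
  simpa using (ha (a⁻¹ x)).symm

lemma bar_cancel {n : ℕ} {h : Equiv.Perm (Leaf n)} (hh : h ∈ W n) (p : Leaf (n - 1)) :
    barP h⁻¹ (barP h p) = p := by
  have h1 := bar_res (inv_mem hh) (h (ext p))
  have h2 : res (h⁻¹ (h (ext p))) = res (ext p) := by simp
  rw [h2, res_ext] at h1
  exact h1.symm

lemma bar_mul {n : ℕ} {g h : Equiv.Perm (Leaf n)} (hg : g ∈ W n) (p : Leaf (n - 1)) :
    barP (g * h) p = barP g (barP h p) := by
  show res (g (h (ext p))) = barP g (res (h (ext p)))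
  exact bar_res hg _

lemma Kset_conj {n : ℕ} {a h : Equiv.Perm (Leaf n)} (hh : h ∈ W n) (ha : Kset n a) :
    Kset n (h⁻¹ * a * h) := by
  intro x
  show res (h⁻¹ (a (h x))) = res x
  rw [bar_res (inv_mem hh) (a (h x)), ha (h x), bar_res hh x]
  exact bar_cancel hh (res x)

lemma bar_conjK {n : ℕ} {a h : Equiv.Perm (Leaf n)} (ha : Kset n a) (hh : h ∈ W n)
    (p : Leaf (n - 1)) : barP (a⁻¹ * h * a) p = barP h p := by
  show res (a⁻¹ (h (a (ext p)))) = res (h (ext p))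
  rw [Kset_inv ha (h (a (ext p))), bar_res hh (a (ext p)), ha (ext p), ← bar_res hh (ext p)]

lemma K_apply {n : ℕ} (hn : 0 < n) {a : Equiv.Perm (Leaf n)} (ha : Kset n a) (x : Leaf n) :
    a x = if FK a (res x) = true then flipL x else x := by
  have hre : res (ext (res x)) = res x := res_ext _
  have hFK : FK a (res x) = decide (a (ext (res x)) ≠ ext (res x)) := rfl
  have hxe : x = ext (res x) ∨ x = flipL (ext (res x)) := eq_or_flip hn hre.symm
  by_cases hb : a (ext (res x)) = ext (res x)
  · have hF : FK a (res x) = false := by rw [hFK]; simp [hb]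
    rw [hF]
    simp only [Bool.false_eq_true, if_false]
    rcases hxe with hx | hx
    · rw [hx]; exact hb
    · rw [hx]
      have h1 : res (a (flipL (ext (res x)))) = res (flipL (ext (res x))) := ha _
      rcases eq_or_flip hn h1 with h2 | h2
      · exact h2
      · rw [flipL_flip_flip] at h2
        have h3 := a.injective (h2.trans hb.symm)
        exact absurd h3 (flip_ne hn _)
  · have hae : a (ext (res x)) = flipL (ext (res x)) := by
      have h1 : res (a (ext (res x))) = res (ext (res x)) := ha _
      rcases eq_or_flip hn h1 with h2 | h2
      · exact absurd h2 hb
      · exact h2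
    have hF : FK a (res x) = true := by rw [hFK]; simp [hb]
    rw [hF, if_pos rfl]
    rcases hxe with hx | hx
    · rw [hx]; exact hae
    · rw [hx]
      have h1 : res (a (flipL (ext (res x)))) = res (flipL (ext (res x))) := ha _
      rcases eq_or_flip hn h1 with h2 | h2
      · exfalso
        have h3 := a.injective (h2.trans hae.symm)
        exact absurd h3 (flip_ne hn _)
      · exact h2

lemma FK_spec {n : ℕ} (hn : 0 < n) {a : Equiv.Perm (Leaf n)} (ha : Kset n a) (x : Leaf n) :
    a x ≠ x ↔ FK a (res x) = true := by
  rw [K_apply hn ha x]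
  cases hF : FK a (res x) <;> simp [flip_ne hn x]

lemma FK_mul {n : ℕ} (hn : 0 < n) {a b : Equiv.Perm (Leaf n)} (ha : Kset n a) (hb : Kset n b)
    (p : Leaf (n - 1)) : FK (a * b) p = xor (FK a p) (FK b p) := by
  have hb1 := K_apply hn hb (ext p)
  have ha1 := K_apply hn ha (b (ext p))
  have hrb : res (b (ext p)) = p := by rw [hb (ext p)]; exact res_ext p
  rw [res_ext] at hb1
  rw [hrb] at ha1
  show decide (a (b (ext p)) ≠ ext p) = xor (FK a p) (FK b p)
  rw [ha1, hb1]
  cases hA : FK a p <;> cases hB : FK b p <;>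
    simp [flipL_flip_flip, flip_ne hn, res_flip]

lemma FK_conj {n : ℕ} (hn : 0 < n) {a h : Equiv.Perm (Leaf n)} (hh : h ∈ W n)
    (ha : Kset n a) (p : Leaf (n - 1)) : FK (h⁻¹ * a * h) p = FK a (barP h p) := by
  have hiff : FK (h⁻¹ * a * h) p = true ↔ FK a (res (h (ext p))) = true := by
    constructor
    · intro hL
      have hne : (h⁻¹ * a * h) (ext p) ≠ ext p := of_decide_eq_true hL
      have hne2 : a (h (ext p)) ≠ h (ext p) := by
        intro hcon
        apply hne
        show h⁻¹ (a (h (ext p))) = ext p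
        rw [hcon]; simp
      exact (FK_spec hn ha (h (ext p))).1 hne2
    · intro hR
      have hne2 : a (h (ext p)) ≠ h (ext p) := (FK_spec hn ha (h (ext p))).2 hR
      have hne : (h⁻¹ * a * h) (ext p) ≠ ext p := by
        show h⁻¹ (a (h (ext p))) ≠ ext p
        intro hcon
        apply hne2
        have h4 : a (h (ext p)) = h (h⁻¹ (a (h (ext p)))) := by simp
        rw [h4, hcon]
      exact decide_eq_true hne
  exact Bool.eq_iff_iff.mpr hiff

lemma Kset_invol {n : ℕ} (hn : 0 < n) {a : Equiv.Perm (Leaf n)} (ha : Kset n a) :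
    a * a = 1 := by
  apply Equiv.ext
  intro x
  show a (a x) = x
  have h1 := K_apply hn ha x
  cases hF : FK a (res x)
  · rw [hF] at h1
    simp only [Bool.false_eq_true, if_false] at h1
    rw [h1, h1]
  · rw [hF, if_pos rfl] at h1
    have h2 := K_apply hn ha (flipL x)
    rw [res_flip, hF, if_pos rfl] at h2
    rw [h1, h2, flipL_flip_flip]

lemma Kset_ext {n : ℕ} (hn : 0 < n) {a a' : Equiv.Perm (Leaf n)} (ha : Kset n a)
    (ha' : Kset n a') (h : ∀ p, FK a p = FK a' p) : a = a' :=
  Equiv.ext fun x => by rw [K_apply hn ha x, K_apply hn ha' x, h (res x)]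

lemma exists_perm_of_fun {n : ℕ} (hn : 0 < n) (f : Leaf (n - 1) → Bool) :
    ∃ b : Equiv.Perm (Leaf n), Kset n b ∧ ∀ p, FK b p = f p := by
  have hinv : Function.Involutive (fun x : Leaf n => if f (res x) = true then flipL x else x) := by
    intro x
    by_cases hfx : f (res x) = true
    · simp only [hfx, if_true, res_flip, flipL_flip_flip]
    · simp [hfx]
  refine ⟨hinv.toPerm _, ?_, ?_⟩
  · intro x
    show res (if f (res x) = true then flipL x else x) = res x
    by_cases hfx : f (res x) = true <;> simp [hfx, res_flip]
  · intro p
    show decide ((if f (res (ext p)) = true then flipL (ext p) else ext p) ≠ ext p) = f p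
    rw [res_ext]
    cases hfp : f p
    · simp [hfp]
    · simp [hfp, flip_ne hn (ext p)]

lemma boolaux (a b c : Bool) (h : xor a (xor b c) = false) : b = xor a c := by
  revert h; cases a <;> cases b <;> cases c <;> decide

lemma boolaux2 (a b : Bool) (h : false = xor a b) : a = b := by
  revert h; cases a <;> cases b <;> decide

/-- Theorem 1.4: if `|H| = |G|`, `H ∩ K_n = 1`, and `H` is elementwise
`K_n`-conjugate into `G`, then `H` is globally `K_n`-conjugate onto `G`. -/
theorem stmt16 (n : ℕ) (H G : Subgroup (Equiv.Perm (Leaf n)))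
    (hH : H ≤ W n) (hG : G ≤ W n)
    (hcard : Nat.card H = Nat.card G)
    (htriv : H ⊓ K n = ⊥)
    (helem : ∀ h ∈ H, ∃ a ∈ K n, a⁻¹ * h * a ∈ G) :
    ∃ b ∈ K n, conjBy b H = G := by
  classical
  rcases Nat.eq_zero_or_pos n with rfl | hn
  · -- trivial case `n = 0`
    have hsub : ∀ σ : Equiv.Perm (Leaf 0), σ = 1 := fun σ =>
      Equiv.ext fun x => Subsingleton.elim _ _
    refine ⟨1, one_mem _, ?_⟩
    ext x
    rw [hsub x]
    exact iff_of_true (one_mem _) (one_mem _)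
  -- Counting: the restriction map is injective on `H`, and its images of `H` and `G` agree.
  have hfinG : (G : Set (Equiv.Perm (Leaf n))).Finite := Set.toFinite _
  have hinjH : Set.InjOn (fun g : Equiv.Perm (Leaf n) => barP g)
      (H : Set (Equiv.Perm (Leaf n))) := by
    intro h₁ hm₁ h₂ hm₂ heq
    replace hm₁ : h₁ ∈ H := hm₁
    replace hm₂ : h₂ ∈ H := hm₂
    have hK12 : h₂⁻¹ * h₁ ∈ K n := by
      rw [mem_K_iff]
      intro x
      show res (h₂⁻¹ (h₁ x)) = res x
      rw [bar_res (inv_mem (hH hm₂)) (h₁ x), bar_res (hH hm₁) x,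
        show barP h₁ = barP h₂ from heq]
      exact bar_cancel (hH hm₂) (res x)
    have hmem : h₂⁻¹ * h₁ ∈ H ⊓ K n :=
      Subgroup.mem_inf.2 ⟨mul_mem (inv_mem hm₂) hm₁, hK12⟩
    rw [htriv, Subgroup.mem_bot] at hmem
    calc h₁ = h₂ * (h₂⁻¹ * h₁) := by group
    _ = h₂ := by rw [hmem, mul_one]
  have hpart : ∀ g ∈ H, ∃ g' ∈ G, barP g' = barP g := by
    intro h hh
    obtain ⟨a, haK, hins⟩ := helem h hh
    exact ⟨a⁻¹ * h * a, hins, funext fun p => bar_conjK ((mem_K_iff a).1 haK) (hH hh) p⟩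
  have himsub : (fun g : Equiv.Perm (Leaf n) => barP g) '' H ⊆ (fun g => barP g) '' G := by
    rintro _ ⟨h, hh, rfl⟩
    obtain ⟨g, hg, hbar⟩ := hpart h hh
    exact ⟨g, hg, hbar⟩
  have hcard' : (H : Set (Equiv.Perm (Leaf n))).ncard = (G : Set (Equiv.Perm (Leaf n))).ncard := by
    rw [← Nat.card_coe_set_eq, ← Nat.card_coe_set_eq]; exact hcard
  have c1 : ((fun g : Equiv.Perm (Leaf n) => barP g) '' H).ncard
      = (H : Set (Equiv.Perm (Leaf n))).ncard := Set.ncard_image_of_injOn hinjH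
  have c2 : ((fun g : Equiv.Perm (Leaf n) => barP g) '' H).ncard
      ≤ ((fun g : Equiv.Perm (Leaf n) => barP g) '' G).ncard :=
    Set.ncard_le_ncard himsub (hfinG.image _)
  have c3 : ((fun g : Equiv.Perm (Leaf n) => barP g) '' G).ncard
      ≤ (G : Set (Equiv.Perm (Leaf n))).ncard := Set.ncard_image_le hfinG
  have himeq : (fun g : Equiv.Perm (Leaf n) => barP g) '' H
      = (fun g : Equiv.Perm (Leaf n) => barP g) '' G :=
    Set.eq_of_subset_of_ncard_le himsub (by omega) (hfinG.image _)
  have hinjG : Set.InjOn (fun g : Equiv.Perm (Leaf n) => barP g)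
      (G : Set (Equiv.Perm (Leaf n))) :=
    Set.injOn_of_ncard_image_eq (by omega) hfinG
  have uniqG : ∀ g₁, g₁ ∈ G → ∀ g₂, g₂ ∈ G → (∀ p, barP g₁ p = barP g₂ p) → g₁ = g₂ := by
    intro g₁ h₁ g₂ h₂ hpp
    exact hinjG h₁ h₂ (funext hpp)
  -- The partner map `Φ` and the cocycle `h ↦ (↑h)⁻¹ * Φ h`.
  have hex : ∀ h : ↥H, ∃ g, g ∈ G ∧ barP g = barP (↑h : Equiv.Perm (Leaf n)) := by
    intro h
    obtain ⟨g, hg, hb⟩ := hpart (↑h) h.2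
    exact ⟨g, hg, hb⟩
  choose Φ hΦG hΦbar using hex
  have hcK : ∀ h : ↥H, Kset n ((↑h : Equiv.Perm (Leaf n))⁻¹ * Φ h) := by
    intro h x
    show res ((↑h : Equiv.Perm (Leaf n))⁻¹ (Φ h x)) = res x
    rw [bar_res (inv_mem (hH h.2)) (Φ h x), bar_res (hG (hΦG h)) x,
      congrFun (hΦbar h) (res x)]
    exact bar_cancel (hH h.2) (res x)
  have hΦmul : ∀ h₁ h₂ : ↥H, Φ (h₁ * h₂) = Φ h₁ * Φ h₂ := by
    intro h₁ h₂
    apply uniqG _ (hΦG _) _ (mul_mem (hΦG h₁) (hΦG h₂))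
    intro p
    calc barP (Φ (h₁ * h₂)) p
        = barP ((↑h₁ : Equiv.Perm (Leaf n)) * ↑h₂) p := by
          rw [congrFun (hΦbar (h₁ * h₂)) p, Subgroup.coe_mul]
      _ = barP (↑h₁ : Equiv.Perm (Leaf n)) (barP (↑h₂) p) := bar_mul (hH h₁.2) p
      _ = barP (Φ h₁) (barP (Φ h₂) p) := by
          rw [congrFun (hΦbar h₁) (barP (Φ h₂) p), congrFun (hΦbar h₂) p]
      _ = barP (Φ h₁ * Φ h₂) p := (bar_mul (hG (hΦG h₁)) p).symm
  have hΦone : Φ 1 = 1 := by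
    apply uniqG _ (hΦG 1) _ (one_mem G)
    intro p
    rw [congrFun (hΦbar 1) p, OneMemClass.coe_one]
  have hcocy : ∀ (h₁ h₂ : ↥H) (p : Leaf (n - 1)),
      FK ((↑(h₁ * h₂) : Equiv.Perm (Leaf n))⁻¹ * Φ (h₁ * h₂)) p
        = xor (FK ((↑h₁ : Equiv.Perm (Leaf n))⁻¹ * Φ h₁) (barP (↑h₂) p))
            (FK ((↑h₂ : Equiv.Perm (Leaf n))⁻¹ * Φ h₂) p) := by
    intro h₁ h₂ p
    have hdec : (↑(h₁ * h₂) : Equiv.Perm (Leaf n))⁻¹ * Φ (h₁ * h₂)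
        = ((↑h₂ : Equiv.Perm (Leaf n))⁻¹ * ((↑h₁ : Equiv.Perm (Leaf n))⁻¹ * Φ h₁) * ↑h₂)
            * ((↑h₂ : Equiv.Perm (Leaf n))⁻¹ * Φ h₂) := by
      rw [hΦmul, Subgroup.coe_mul]
      group
    rw [hdec, FK_mul hn (Kset_conj (hH h₂.2) (hcK h₁)) (hcK h₂),
      FK_conj hn (hH h₂.2) (hcK h₁)]
  have hone : ∀ p, FK ((↑(1 : ↥H) : Equiv.Perm (Leaf n))⁻¹ * Φ 1) p = false := by
    intro p
    rw [hΦone]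
    simp [FK]
  have hcinv : ∀ (h : ↥H) (p : Leaf (n - 1)),
      FK ((↑(h⁻¹) : Equiv.Perm (Leaf n))⁻¹ * Φ h⁻¹) (barP (↑h) p)
        = FK ((↑h : Equiv.Perm (Leaf n))⁻¹ * Φ h) p := by
    intro h p
    have h1 := hcocy h⁻¹ h p
    rw [inv_mul_cancel, hone p] at h1
    exact boolaux2 _ _ h1
  have hfix : ∀ (h : ↥H) (p : Leaf (n - 1)), barP (↑h) p = p →
      FK ((↑h : Equiv.Perm (Leaf n))⁻¹ * Φ h) p = false := by
    intro h p hp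
    obtain ⟨a, haK, hgG⟩ := helem (↑h) h.2
    have haKs : Kset n a := (mem_K_iff a).1 haK
    have hgΦ : a⁻¹ * ↑h * a = Φ h :=
      uniqG _ hgG _ (hΦG h)
        (fun q => (bar_conjK haKs (hH h.2) q).trans (congrFun (hΦbar h) q).symm)
    have ha2 : a⁻¹ = a := inv_eq_of_mul_eq_one_right (Kset_invol hn haKs)
    have hdec : (↑h : Equiv.Perm (Leaf n))⁻¹ * Φ h
        = ((↑h : Equiv.Perm (Leaf n))⁻¹ * a * ↑h) * a := by
      rw [← hgΦ, ha2]
      group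
    rw [hdec, FK_mul hn (Kset_conj (hH h.2) haKs) haKs, FK_conj hn (hH h.2) haKs, hp,
      Bool.xor_self]
  -- Orbit representatives for the action of `H` on `Leaf (n-1)`.
  have hrefl : ∀ p : Leaf (n - 1), ∃ h : ↥H, barP (↑h) p = p := by
    intro p
    refine ⟨1, ?_⟩
    show res ((1 : Equiv.Perm (Leaf n)) (ext p)) = p
    simp [res_ext]
  have hsymm : ∀ {p q : Leaf (n - 1)},
      (∃ h : ↥H, barP (↑h) p = q) → ∃ h : ↥H, barP (↑h) q = p := by
    rintro p q ⟨h, rfl⟩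
    exact ⟨h⁻¹, bar_cancel (hH h.2) p⟩
  have htrans : ∀ {p q u : Leaf (n - 1)},
      (∃ h : ↥H, barP (↑h) p = q) → (∃ h : ↥H, barP (↑h) q = u) →
        ∃ h : ↥H, barP (↑h) p = u := by
    rintro p q u ⟨h, rfl⟩ ⟨h', rfl⟩
    refine ⟨h' * h, ?_⟩
    rw [show ((↑(h' * h) : Equiv.Perm (Leaf n)))
        = (↑h' : Equiv.Perm (Leaf n)) * ↑h from rfl, bar_mul (hH h'.2)]
  let sd : Setoid (Leaf (n - 1)) :=
    ⟨fun p q => ∃ h : ↥H, barP (↑h) p = q, ⟨hrefl, hsymm, htrans⟩⟩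
  let rep : Leaf (n - 1) → Leaf (n - 1) := fun p => (Quotient.mk sd p).out
  have hrepr : ∀ p, ∃ h : ↥H, barP (↑h) (rep p) = p := by
    intro p
    exact Quotient.exact (Quotient.out_eq (Quotient.mk sd p))
  have hrep_eq : ∀ p q, (∃ h : ↥H, barP (↑h) p = q) → rep p = rep q := by
    intro p q h
    exact congrArg Quotient.out (Quotient.sound (a := p) (b := q) h)
  choose sel hsel using hrepr
  -- The global conjugator `b`.
  obtain ⟨b, hbK, hFKb⟩ := exists_perm_of_fun hn
    (fun p => FK ((↑(sel p) : Equiv.Perm (Leaf n))⁻¹ * Φ (sel p)) (rep p))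
  have hmain : ∀ (h : ↥H) (p : Leaf (n - 1)),
      FK ((↑h : Equiv.Perm (Leaf n))⁻¹ * Φ h) p
        = xor (FK b (barP (↑h) p)) (FK b p) := by
    intro h p
    have hrepq : rep p = rep (barP (↑h) p) := hrep_eq _ _ ⟨h, rfl⟩
    have h1 : barP (↑(sel p)) (rep p) = p := hsel p
    have h2 : barP (↑(sel (barP (↑h) p))) (rep p) = barP (↑h) p := by
      rw [hrepq]
      exact hsel _
    have hs0 : barP (↑((sel (barP (↑h) p))⁻¹ * (h * sel p))) (rep p) = rep p := by
      rw [show ((↑((sel (barP (↑h) p))⁻¹ * (h * sel p)) : Equiv.Perm (Leaf n)))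
          = (↑(sel (barP (↑h) p)) : Equiv.Perm (Leaf n))⁻¹
            * ((↑h : Equiv.Perm (Leaf n)) * ↑(sel p)) from rfl]
      rw [bar_mul (inv_mem (hH (sel (barP (↑h) p)).2)), bar_mul (hH h.2), h1]
      have h4 := congrArg (barP ((↑(sel (barP (↑h) p)) : Equiv.Perm (Leaf n))⁻¹)) h2
      rw [← h4]
      exact bar_cancel (hH (sel (barP (↑h) p)).2) (rep p)
    have hz := hfix _ _ hs0
    have hc1 := hcocy (sel (barP (↑h) p))⁻¹ (h * sel p) (rep p)
    have hc2 := hcocy h (sel p) (rep p)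
    have hb1 : barP (↑(h * sel p) : Equiv.Perm (Leaf n)) (rep p) = barP (↑h) p := by
      rw [show ((↑(h * sel p) : Equiv.Perm (Leaf n)))
          = (↑h : Equiv.Perm (Leaf n)) * ↑(sel p) from rfl, bar_mul (hH h.2), h1]
    have hb2 : FK ((↑((sel (barP (↑h) p))⁻¹) : Equiv.Perm (Leaf n))⁻¹
          * Φ (sel (barP (↑h) p))⁻¹) (barP (↑h) p)
        = FK ((↑(sel (barP (↑h) p)) : Equiv.Perm (Leaf n))⁻¹ * Φ (sel (barP (↑h) p)))
            (rep (barP (↑h) p)) := by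
      have h3 := hcinv (sel (barP (↑h) p)) (rep (barP (↑h) p))
      rw [hsel (barP (↑h) p)] at h3
      exact h3
    rw [hb1] at hc1
    rw [h1] at hc2
    rw [hc2, hb2] at hc1
    rw [hc1] at hz
    rw [hFKb, hFKb]
    exact boolaux _ _ _ hz
  have hbinv : b⁻¹ = b := inv_eq_of_mul_eq_one_right (Kset_invol hn hbK)
  have hkey : ∀ h : ↥H, b⁻¹ * (↑h : Equiv.Perm (Leaf n)) * b = Φ h := by
    intro h
    have hsuf : ((↑h : Equiv.Perm (Leaf n))⁻¹ * b * ↑h) * b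
        = (↑h : Equiv.Perm (Leaf n))⁻¹ * Φ h := by
      apply Kset_ext hn (Kset_mul (Kset_conj (hH h.2) hbK) hbK) (hcK h)
      intro p
      rw [FK_mul hn (Kset_conj (hH h.2) hbK) hbK, FK_conj hn (hH h.2) hbK]
      exact (hmain h p).symm
    calc b⁻¹ * (↑h : Equiv.Perm (Leaf n)) * b
        = ↑h * (((↑h : Equiv.Perm (Leaf n))⁻¹ * b * ↑h) * b) := by rw [hbinv]; group
      _ = ↑h * ((↑h : Equiv.Perm (Leaf n))⁻¹ * Φ h) := by rw [hsuf]
      _ = Φ h := by group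
  refine ⟨b, (mem_K_iff b).2 hbK, ?_⟩
  apply le_antisymm
  · intro x hx
    simp only [conjBy, Subgroup.mem_map] at hx
    obtain ⟨h, hh, rfl⟩ := hx
    have h2 : (MulAut.conj b⁻¹).toMonoidHom h = Φ ⟨h, hh⟩ := by
      rw [show (MulAut.conj b⁻¹).toMonoidHom h = b⁻¹ * h * b⁻¹⁻¹ from rfl, inv_inv]
      exact hkey ⟨h, hh⟩
    rw [h2]
    exact hΦG _
  · intro g hg
    have himg : (fun g' : Equiv.Perm (Leaf n) => barP g') g
        ∈ (fun g' : Equiv.Perm (Leaf n) => barP g') '' (H : Set (Equiv.Perm (Leaf n))) := by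
      rw [himeq]
      exact ⟨g, hg, rfl⟩
    obtain ⟨h, hh, hb'⟩ := himg
    have hΦg : Φ ⟨h, hh⟩ = g := by
      apply uniqG _ (hΦG _) _ hg
      intro p
      rw [congrFun (hΦbar ⟨h, hh⟩) p]
      exact congrFun hb' p
    simp only [conjBy, Subgroup.mem_map]
    refine ⟨h, hh, ?_⟩
    rw [show (MulAut.conj b⁻¹).toMonoidHom h = b⁻¹ * h * b⁻¹⁻¹ from rfl, inv_inv]
    exact (hkey ⟨h, hh⟩).trans hΦg
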